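/- Let B ⊆ ℕ^m be a positive affine semigroup such that C(B) is generated by linearly independent elements e_1,…,e_d ∈ B, and let A be the submonoid of B generated by e_1,…,e_d. Assume that for every coset g of G(A) in G(B) there is an h_g ∈ G(B) such that either B ∩ g = h_g + A or B ∩ g = h_g + (A ∖ {0}). Let H := {h ∈ G(B) : B ∩ (h + G(A)) = h + (A ∖ {0})} and C := Hilb(B) ∖ {e_1,…,e_d}. Then (H + C) ∩ H = ∅ if and only if h + b ∈ B for all h ∈ H and all b ∈ Hilb(B). -/
import Mathlib


open scoped BigOperators

/-- The coordinatewise cast `ℕ^m → ℤ^m`. -/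
def ntz {m : ℕ} (x : Fin m → ℕ) : Fin m → ℤ := fun i => (x i : ℤ)

/-- The coordinatewise cast `ℕ^m → ℚ^m`. -/
def ntq {m : ℕ} (x : Fin m → ℕ) : Fin m → ℚ := fun i => (x i : ℚ)

/-- `G(S)`: the subgroup of `ℤ^m` generated by an affine semigroup `S ⊆ ℕ^m`. -/
def grp {m : ℕ} (S : AddSubmonoid (Fin m → ℕ)) : AddSubgroup (Fin m → ℤ) :=
  AddSubgroup.closure (ntz '' (S : Set (Fin m → ℕ)))

/-- `C(S)`: the cone in `ℚ^m` generated by `S`, i.e. all nonnegative rational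
linear combinations of elements of `S`. -/
def cone {m : ℕ} (S : AddSubmonoid (Fin m → ℕ)) : Set (Fin m → ℚ) :=
  {x | ∃ (n : ℕ) (c : Fin n → ℚ) (v : Fin n → Fin m → ℕ),
    (∀ i, 0 ≤ c i) ∧ (∀ i, v i ∈ S) ∧ x = ∑ i, c i • ntq (v i)}

/-- `B_A := {x ∈ B : x ∉ B + (A \ {0})}`. -/
def BA {m : ℕ} (A B : AddSubmonoid (Fin m → ℕ)) : Set (Fin m → ℕ) :=
  {x | x ∈ B ∧ ¬ ∃ b ∈ B, ∃ a ∈ A, a ≠ 0 ∧ x = b + a}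

/-- `Hilb(S)`: the unique minimal generating set of a positive affine semigroup
`S ⊆ ℕ^m`, i.e. the set of nonzero elements of `S` that are not sums of two nonzero
elements of `S`. -/
def Hilb {m : ℕ} (S : AddSubmonoid (Fin m → ℕ)) : Set (Fin m → ℕ) :=
  {x | x ∈ S ∧ x ≠ 0 ∧ ¬ ∃ y ∈ S, ∃ z ∈ S, y ≠ 0 ∧ z ≠ 0 ∧ x = y + z}

/-- The coordinatewise cast `ℤ^m → ℚ^m`. -/
def ztq {m : ℕ} (x : Fin m → ℤ) : Fin m → ℚ := fun i => (x i : ℚ)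

section Aux
variable {m d : ℕ}

lemma ntz_add (x y : Fin m → ℕ) : ntz (x + y) = ntz x + ntz y := by
  funext i; simp [ntz]

lemma ntz_zero : ntz (0 : Fin m → ℕ) = 0 := by funext i; simp [ntz]

lemma ntz_inj : Function.Injective (ntz (m := m)) := by
  intro x y h; funext i
  have := congrFun h i
  simpa [ntz] using this

lemma ntz_eq_zero {x : Fin m → ℕ} (h : ntz x = 0) : x = 0 :=
  ntz_inj (by rw [h, ntz_zero])

lemma ntz_sum (n : Fin d → ℕ) (e : Fin d → Fin m → ℕ) :
    ntz (∑ j, n j • e j) = ∑ j, (n j : ℤ) • ntz (e j) := by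
  funext i
  simp only [ntz, Finset.sum_apply, Pi.smul_apply, smul_eq_mul]
  push_cast
  rfl

lemma ztq_ntz (x : Fin m → ℕ) : ztq (ntz x) = ntq x := by
  funext i; simp [ztq, ntz, ntq]

lemma ztq_add (x y : Fin m → ℤ) : ztq (x + y) = ztq x + ztq y := by
  funext i; simp [ztq]

lemma ztq_sum (z : Fin d → ℤ) (v : Fin d → Fin m → ℤ) :
    ztq (∑ j, z j • v j) = ∑ j, (z j : ℚ) • ztq (v j) := by
  funext i
  simp only [ztq, Finset.sum_apply, Pi.smul_apply, smul_eq_mul]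
  push_cast
  rfl

lemma coeff_unique {e : Fin d → Fin m → ℕ}
    (hli : LinearIndependent ℚ (fun k => ntq (e k)))
    {q r : Fin d → ℚ} (h : ∑ j, q j • ntq (e j) = ∑ j, r j • ntq (e j)) : q = r := by
  funext j
  have h0 : ∑ j, (q j - r j) • ntq (e j) = 0 := by
    simp [sub_smul, Finset.sum_sub_distrib, h]
  have := Fintype.linearIndependent_iff.mp hli (fun j => q j - r j) h0 j
  linarith [this]

lemma mem_closure_range_iff (e : Fin d → Fin m → ℕ) (a : Fin m → ℕ) :
    a ∈ AddSubmonoid.closure (Set.range e) ↔ ∃ n : Fin d → ℕ, a = ∑ j, n j • e j := by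
  constructor
  · intro ha
    refine AddSubmonoid.closure_induction ?_ ?_ ?_ ha
    · rintro x ⟨k, rfl⟩
      refine ⟨fun j => if j = k then 1 else 0, ?_⟩
      simp [ite_smul, Finset.sum_ite_eq']
    · exact ⟨0, by simp⟩
    · rintro x y - - ⟨n1, rfl⟩ ⟨n2, rfl⟩
      exact ⟨n1 + n2, by simp [add_smul, Finset.sum_add_distrib]⟩
  · rintro ⟨n, rfl⟩
    exact AddSubmonoid.sum_mem _ fun j _ =>
      AddSubmonoid.nsmul_mem _ (AddSubmonoid.subset_closure (Set.mem_range_self j)) _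

lemma mem_grpA_iff (e : Fin d → Fin m → ℕ) (y : Fin m → ℤ) :
    y ∈ grp (AddSubmonoid.closure (Set.range e)) ↔
      ∃ z : Fin d → ℤ, y = ∑ j, z j • ntz (e j) := by
  constructor
  · intro hy
    refine AddSubgroup.closure_induction ?_ ?_ ?_ ?_ hy
    · rintro x ⟨a, ha, rfl⟩
      obtain ⟨n, rfl⟩ := (mem_closure_range_iff e a).mp ha
      exact ⟨fun j => (n j : ℤ), by rw [ntz_sum]⟩
    · exact ⟨0, by simp⟩
    · rintro x y - - ⟨z1, rfl⟩ ⟨z2, rfl⟩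
      exact ⟨z1 + z2, by simp [add_smul, Finset.sum_add_distrib]⟩
    · rintro x - ⟨z, rfl⟩
      refine ⟨-z, ?_⟩
      rw [← Finset.sum_neg_distrib]
      exact Finset.sum_congr rfl fun j _ => by simp
  · rintro ⟨z, rfl⟩
    exact AddSubgroup.sum_mem _ fun j _ => AddSubgroup.zsmul_mem _
      (AddSubgroup.subset_closure
        (Set.mem_image_of_mem ntz (AddSubmonoid.subset_closure (Set.mem_range_self j)))) _

lemma coeff_constraint {e : Fin d → Fin m → ℕ}
    (hli : LinearIndependent ℚ (fun k => ntq (e k)))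
    {z : Fin d → ℤ} {n : Fin d → ℕ} {k : Fin d}
    (heq : ∑ j, z j • ntz (e j) + ntz (e k) = ∑ j, (n j : ℤ) • ntz (e j)) :
    ∀ j, z j + (if j = k then 1 else 0) = (n j : ℤ) := by
  have hq := congrArg ztq heq
  rw [ztq_add, ztq_sum, ztq_sum] at hq
  simp only [ztq_ntz] at hq
  have hq2 : ∑ j, ((z j : ℚ) + if j = k then 1 else 0) • ntq (e j)
      = ∑ j, (((n j : ℤ) : ℚ)) • ntq (e j) := by
    rw [← hq]
    simp [add_smul, Finset.sum_add_distrib, ite_smul, Finset.sum_ite_eq']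
  have h3 := coeff_unique hli hq2
  intro j
  have h4 := congrFun h3 j
  by_cases hj : j = k <;> simp [hj] at h4 ⊢ <;> exact_mod_cast h4

end Aux

/-- Let `B ⊆ ℕ^m` be a positive affine semigroup such that `C(B)` is
generated by linearly independent `e₁,…,e_d ∈ B`, and let `A` be the submonoid of `B`
generated by the `e_k`.  Assume that for every coset `g` of `G(A)` in `G(B)` there is
`h_g ∈ G(B)` with `B ∩ g = h_g + A` or `B ∩ g = h_g + (A \ {0})`.  Let
`H := {h ∈ G(B) : B ∩ (h + G(A)) = h + (A \ {0})}` and `C := Hilb(B) \ {e₁,…,e_d}`.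
Then `(H + C) ∩ H = ∅` iff `h + b ∈ B` for all `h ∈ H` and all `b ∈ Hilb(B)`. -/
theorem stmt13 {m d : ℕ} (B : AddSubmonoid (Fin m → ℕ)) (hBfg : B.FG)
    (e : Fin d → Fin m → ℕ) (he : ∀ k, e k ∈ B)
    (hli : LinearIndependent ℚ (fun k => ntq (e k)))
    (A : AddSubmonoid (Fin m → ℕ)) (hA : A = AddSubmonoid.closure (Set.range e))
    (hcone : cone B = cone A)
    (hdec : ∀ x ∈ grp B, ∃ hg ∈ grp B,
      {y : Fin m → ℤ | ∃ b ∈ B, ntz b = y ∧ y - x ∈ grp A} =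
          {y : Fin m → ℤ | ∃ a ∈ A, y = hg + ntz a} ∨
      {y : Fin m → ℤ | ∃ b ∈ B, ntz b = y ∧ y - x ∈ grp A} =
          {y : Fin m → ℤ | ∃ a ∈ A, a ≠ 0 ∧ y = hg + ntz a})
    (H : Set (Fin m → ℤ))
    (hH : H = {h : Fin m → ℤ | h ∈ grp B ∧
      {y : Fin m → ℤ | ∃ b ∈ B, ntz b = y ∧ y - h ∈ grp A} =
        {y : Fin m → ℤ | ∃ a ∈ A, a ≠ 0 ∧ y = h + ntz a}})
    (C : Set (Fin m → ℕ)) (hC : C = Hilb B \ Set.range e) :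
    {y : Fin m → ℤ | ∃ h ∈ H, ∃ c ∈ C, y = h + ntz c} ∩ H = ∅ ↔
      ∀ h ∈ H, ∀ b ∈ Hilb B, ∃ c ∈ B, ntz c = h + ntz b := by
  subst hA hH hC
  have hekA : ∀ k, e k ∈ AddSubmonoid.closure (Set.range e) :=
    fun k => AddSubmonoid.subset_closure (Set.mem_range_self k)
  have hek0 : ∀ k, e k ≠ 0 := by
    intro k hk
    apply hli.ne_zero k
    funext i
    simp [ntq, congrFun hk i]
  constructor
  · -- forward direction
    intro hdisj h hh b hb
    have hhg := hh.1
    have hhset := hh.2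
    have hhmem : ∀ a ∈ AddSubmonoid.closure (Set.range e), a ≠ 0 →
        ∃ c ∈ B, ntz c = h + ntz a := by
      intro a ha ha0
      have hm : h + ntz a ∈ {y : Fin m → ℤ |
          ∃ a ∈ AddSubmonoid.closure (Set.range e), a ≠ 0 ∧ y = h + ntz a} :=
        ⟨a, ha, ha0, rfl⟩
      rw [← hhset] at hm
      obtain ⟨c, hcB, hc, -⟩ := hm
      exact ⟨c, hcB, hc⟩
    by_cases hbe : b ∈ Set.range e
    · obtain ⟨k, rfl⟩ := hbe
      exact hhmem (e k) (hekA k) (hek0 k)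
    · have hbC : b ∈ Hilb B \ Set.range e := ⟨hb, hbe⟩
      have hbB : b ∈ B := hb.1
      rcases Nat.eq_zero_or_pos d with hd0 | hd0
      · -- degenerate case d = 0 : Hilb B = ∅
        exfalso
        subst hd0
        have hcb : ntq b ∈ cone B := by
          refine ⟨1, fun _ => 1, fun _ => b, fun _ => zero_le_one, fun _ => hbB, ?_⟩
          simp
        rw [hcone] at hcb
        obtain ⟨n, c, v, hc, hv, hx⟩ := hcb
        have hv0 : ∀ i, ntq (v i) = 0 := by
          intro i
          obtain ⟨nn, hnn⟩ := (mem_closure_range_iff e (v i)).mp (hv i)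
          rw [hnn]
          funext ii
          simp [ntq]
        have hb0 : ntq b = 0 := by
          rw [hx]
          apply Finset.sum_eq_zero
          intro i _
          rw [hv0 i, smul_zero]
        apply hb.2.1
        funext i
        have := congrFun hb0 i
        simpa [ntq] using this
      · -- main case d ≥ 1
        have hF1 : ∀ a ∈ AddSubmonoid.closure (Set.range e), a ≠ 0 →
            ∃ c ∈ B, ntz c = h + ntz b + ntz a := by
          intro a ha ha0
          obtain ⟨c, hcB, hc⟩ := hhmem a ha ha0
          refine ⟨c + b, B.add_mem hcB hbB, ?_⟩
          rw [ntz_add, hc]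
          ring
        have hbgrp : ntz b ∈ grp B := AddSubgroup.subset_closure ⟨b, hbB, rfl⟩
        have hhbgrp : h + ntz b ∈ grp B := AddSubgroup.add_mem _ hhg hbgrp
        obtain ⟨hg, hggrp, hcase⟩ := hdec (h + ntz b) hhbgrp
        have hLmem : ∀ a ∈ AddSubmonoid.closure (Set.range e), a ≠ 0 →
            (h + ntz b + ntz a) ∈ {y : Fin m → ℤ | ∃ c ∈ B, ntz c = y ∧
              y - (h + ntz b) ∈ grp (AddSubmonoid.closure (Set.range e))} := by
          intro a ha ha0
          obtain ⟨c, hcB, hc⟩ := hF1 a ha ha0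
          refine ⟨c, hcB, hc, ?_⟩
          have hsub : h + ntz b + ntz a - (h + ntz b) = ntz a := by ring
          rw [hsub]
          exact AddSubgroup.subset_closure ⟨a, ha, rfl⟩
        rcases hcase with hcase | hcase
        · -- B ∩ g = hg + A
          have hgmem : hg ∈ {y : Fin m → ℤ |
              ∃ a ∈ AddSubmonoid.closure (Set.range e), y = hg + ntz a} :=
            ⟨0, zero_mem _, by rw [ntz_zero, add_zero]⟩
          rw [← hcase] at hgmem
          obtain ⟨cg, hcgB, hcg, hggA⟩ := hgmem
          obtain ⟨z, hz⟩ := (mem_grpA_iff e _).mp (AddSubgroup.neg_mem _ hggA)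
          rw [neg_sub] at hz
          have key : ∀ k, (∀ j, j ≠ k → 0 ≤ z j) ∧ -1 ≤ z k := by
            intro k
            have hmem := hLmem (e k) (hekA k) (hek0 k)
            rw [hcase] at hmem
            obtain ⟨a, haA, ha⟩ := hmem
            obtain ⟨n, rfl⟩ := (mem_closure_range_iff e a).mp haA
            have heq : ∑ j, z j • ntz (e j) + ntz (e k) = ∑ j, (n j : ℤ) • ntz (e j) := by
              rw [← ntz_sum, ← hz]
              linear_combination ha
            have hcoef := coeff_constraint hli heq
            constructor
            · intro j hj
              have h5 := hcoef j
              simp [hj] at h5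
              omega
            · have h5 := hcoef k
              simp at h5
              omega
          by_cases hz0 : ∀ j, 0 ≤ z j
          · have haA : (∑ j, (z j).toNat • e j) ∈ AddSubmonoid.closure (Set.range e) :=
              AddSubmonoid.sum_mem _ fun j _ => AddSubmonoid.nsmul_mem _ (hekA j) _
            have heqv : h + ntz b = hg + ntz (∑ j, (z j).toNat • e j) := by
              rw [ntz_sum]
              have hsc : ∑ j, ((z j).toNat : ℤ) • ntz (e j) = ∑ j, z j • ntz (e j) :=
                Finset.sum_congr rfl fun j _ => by rw [Int.toNat_of_nonneg (hz0 j)]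
              rw [hsc, ← hz]
              ring
            have hmem : h + ntz b ∈ {y : Fin m → ℤ |
                ∃ a ∈ AddSubmonoid.closure (Set.range e), y = hg + ntz a} :=
              ⟨_, haA, heqv⟩
            rw [← hcase] at hmem
            obtain ⟨c, hcB, hc, -⟩ := hmem
            exact ⟨c, hcB, hc⟩
          · push_neg at hz0
            obtain ⟨k, hk⟩ := hz0
            have huniq : ∀ j, j = k := by
              intro j
              by_contra hj
              exact absurd ((key j).1 k fun hkj => hj hkj.symm) (not_le.mpr hk)
            have hzk : z k = -1 := le_antisymm (by omega) ((key k).2)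
            have hsum : ∑ j, z j • ntz (e j) = -(ntz (e k)) := by
              rw [Finset.sum_eq_single_of_mem k (Finset.mem_univ k)
                (fun j _ hj => absurd (huniq j) hj), hzk]
              simp
            have hgval : hg = h + ntz b + ntz (e k) := by
              rw [hsum] at hz
              linear_combination -hz
            have hHmem : (h + ntz b) ∈ {h : Fin m → ℤ | h ∈ grp B ∧
                {y : Fin m → ℤ | ∃ b ∈ B, ntz b = y ∧
                  y - h ∈ grp (AddSubmonoid.closure (Set.range e))} =
                {y : Fin m → ℤ | ∃ a ∈ AddSubmonoid.closure (Set.range e),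
                  a ≠ 0 ∧ y = h + ntz a}} := by
              refine ⟨hhbgrp, ?_⟩
              rw [hcase]
              ext y
              constructor
              · rintro ⟨a, haA, rfl⟩
                refine ⟨e k + a, add_mem (hekA k) haA, ?_, ?_⟩
                · intro h0
                  apply hek0 k
                  funext i
                  have h1 : e k i + a i = 0 := congrFun h0 i
                  simp only [Pi.zero_apply]
                  omega
                · rw [hgval, ntz_add]
                  ring
              · rintro ⟨a, haA, ha0, rfl⟩
                obtain ⟨n, rfl⟩ := (mem_closure_range_iff e a).mp haA
                have hnsum : ∑ j, n j • e j = n k • e k :=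
                  Finset.sum_eq_single_of_mem k (Finset.mem_univ k)
                    (fun j _ hj => absurd (huniq j) hj)
                have hnk : n k ≠ 0 := by
                  intro h0
                  apply ha0
                  rw [hnsum, h0, zero_smul]
                obtain ⟨nn, hnn⟩ := Nat.exists_eq_succ_of_ne_zero hnk
                refine ⟨nn • e k, AddSubmonoid.nsmul_mem _ (hekA k) nn, ?_⟩
                rw [hgval, hnsum, hnn, succ_nsmul, ntz_add]
                ring
            exact (Set.eq_empty_iff_forall_notMem.mp hdisj (h + ntz b)
              ⟨⟨h, hh, b, hbC, rfl⟩, hHmem⟩).elim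
        · -- B ∩ g = hg + (A \ {0})
          have hmem0 := hLmem (e ⟨0, hd0⟩) (hekA _) (hek0 _)
          rw [hcase] at hmem0
          obtain ⟨a1, ha1A, ha10, ha1⟩ := hmem0
          have hggA : h + ntz b - hg ∈ grp (AddSubmonoid.closure (Set.range e)) := by
            have h1 : ntz a1 ∈ grp (AddSubmonoid.closure (Set.range e)) :=
              AddSubgroup.subset_closure ⟨a1, ha1A, rfl⟩
            have h2 : ntz (e ⟨0, hd0⟩) ∈ grp (AddSubmonoid.closure (Set.range e)) :=
              AddSubgroup.subset_closure ⟨_, hekA _, rfl⟩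
            have hrw : h + ntz b - hg = ntz a1 - ntz (e ⟨0, hd0⟩) := by
              linear_combination ha1
            rw [hrw]
            exact sub_mem h1 h2
          obtain ⟨z, hz⟩ := (mem_grpA_iff e _).mp hggA
          have key : ∀ k, (∀ j, j ≠ k → 0 ≤ z j) ∧ -1 ≤ z k := by
            intro k
            have hmem := hLmem (e k) (hekA k) (hek0 k)
            rw [hcase] at hmem
            obtain ⟨a, haA, -, ha⟩ := hmem
            obtain ⟨n, rfl⟩ := (mem_closure_range_iff e a).mp haA
            have heq : ∑ j, z j • ntz (e j) + ntz (e k) = ∑ j, (n j : ℤ) • ntz (e j) := by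
              rw [← ntz_sum, ← hz]
              linear_combination ha
            have hcoef := coeff_constraint hli heq
            constructor
            · intro j hj
              have h5 := hcoef j
              simp [hj] at h5
              omega
            · have h5 := hcoef k
              simp at h5
              omega
          by_cases hz0 : ∀ j, 0 ≤ z j
          · by_cases hzz : ∀ j, z j = 0
            · have hgeq : hg = h + ntz b := by
                have hs0 : h + ntz b - hg = 0 := by
                  rw [hz]
                  exact Finset.sum_eq_zero fun j _ => by rw [hzz j, zero_smul]
                linear_combination -hs0
              have hHmem : (h + ntz b) ∈ {h : Fin m → ℤ | h ∈ grp B ∧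
                  {y : Fin m → ℤ | ∃ b ∈ B, ntz b = y ∧
                    y - h ∈ grp (AddSubmonoid.closure (Set.range e))} =
                  {y : Fin m → ℤ | ∃ a ∈ AddSubmonoid.closure (Set.range e),
                    a ≠ 0 ∧ y = h + ntz a}} := by
                refine ⟨hhbgrp, ?_⟩
                rw [hcase, hgeq]
              exact (Set.eq_empty_iff_forall_notMem.mp hdisj (h + ntz b)
                ⟨⟨h, hh, b, hbC, rfl⟩, hHmem⟩).elim
            · push_neg at hzz
              obtain ⟨j0, hj0⟩ := hzz
              have haA : (∑ j, (z j).toNat • e j) ∈ AddSubmonoid.closure (Set.range e) :=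
                AddSubmonoid.sum_mem _ fun j _ => AddSubmonoid.nsmul_mem _ (hekA j) _
              have ha0 : (∑ j, (z j).toNat • e j) ≠ 0 := by
                intro h0
                apply hj0
                have hnz : ntz (∑ j, (z j).toNat • e j) = 0 := by rw [h0, ntz_zero]
                rw [ntz_sum] at hnz
                have hq := congrArg ztq hnz
                rw [ztq_sum] at hq
                simp only [ztq_ntz] at hq
                have h00 := coeff_unique hli
                  (q := fun j => (((z j).toNat : ℤ) : ℚ)) (r := fun _ => 0)
                  (by rw [hq]; funext ii; simp [ztq])
                have h01 := congrFun h00 j0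
                have hzj := hz0 j0
                simp at h01
                omega
              have heqv : h + ntz b = hg + ntz (∑ j, (z j).toNat • e j) := by
                rw [ntz_sum]
                have hsc : ∑ j, ((z j).toNat : ℤ) • ntz (e j) = ∑ j, z j • ntz (e j) :=
                  Finset.sum_congr rfl fun j _ => by rw [Int.toNat_of_nonneg (hz0 j)]
                rw [hsc, ← hz]
                ring
              have hmem : h + ntz b ∈ {y : Fin m → ℤ |
                  ∃ a ∈ AddSubmonoid.closure (Set.range e), a ≠ 0 ∧ y = hg + ntz a} :=
                ⟨_, haA, ha0, heqv⟩
              rw [← hcase] at hmem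
              obtain ⟨c, hcB, hc, -⟩ := hmem
              exact ⟨c, hcB, hc⟩
          · push_neg at hz0
            obtain ⟨k, hk⟩ := hz0
            have huniq : ∀ j, j = k := by
              intro j
              by_contra hj
              exact absurd ((key j).1 k fun hkj => hj hkj.symm) (not_le.mpr hk)
            have hzk : z k = -1 := le_antisymm (by omega) ((key k).2)
            have hsum : ∑ j, z j • ntz (e j) = -(ntz (e k)) := by
              rw [Finset.sum_eq_single_of_mem k (Finset.mem_univ k)
                (fun j _ hj => absurd (huniq j) hj), hzk]
              simp
            have hgval : hg = h + ntz b + ntz (e k) := by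
              rw [hsum] at hz
              linear_combination -hz
            exfalso
            have hmemk := hLmem (e k) (hekA k) (hek0 k)
            rw [hcase] at hmemk
            obtain ⟨a, haA, ha0, ha⟩ := hmemk
            apply ha0
            apply ntz_eq_zero
            rw [hgval] at ha
            linear_combination -ha
  · -- backward direction
    intro hall
    rw [Set.eq_empty_iff_forall_notMem]
    rintro y ⟨⟨h, hh, c, hc, rfl⟩, hyH⟩
    obtain ⟨c', hc'B, hc'⟩ := hall h hh c hc.1
    have hmem : h + ntz c ∈ {y : Fin m → ℤ | ∃ b ∈ B, ntz b = y ∧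
        y - (h + ntz c) ∈ grp (AddSubmonoid.closure (Set.range e))} :=
      ⟨c', hc'B, hc', by rw [sub_self]; exact zero_mem _⟩
    rw [hyH.2] at hmem
    obtain ⟨a, haA, ha0, ha⟩ := hmem
    apply ha0
    apply ntz_eq_zero
    linear_combination -ha
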